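/- Let κ₁, κ₂ > 0 with κ₁ ≤ κ₂, let c₁, c₂ ≥ 0, and let T > 0. Let L : ℝ → ℝ satisfy κ₁ℓ ≤ L(m + ℓ) − L(m) ≤ κ₂ℓ for all m ∈ ℝ and ℓ ≥ 0. Let E, F ⊆ ℝ be Lebesgue measurable sets with Leb([0, T] ∩ E) ≥ (1 − c₁)·T and Leb(L([0, T]) ∩ F) ≥ (1 − c₂)·Leb(L([0, T])). Then Leb([0, T] ∩ E ∩ L⁻¹(F)) ≥ (1 − c₁ − c₂·κ₂/κ₁)·T. -/

import Mathlib

open MeasureTheory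

/-- Density estimate along a bi-Lipschitz time change.  Let `0 < κ₁ ≤ κ₂`,
`c₁, c₂ ≥ 0`, `T > 0`, and let `L : ℝ → ℝ` satisfy `κ₁ ℓ ≤ L(m+ℓ) − L(m) ≤ κ₂ ℓ` for `ℓ ≥ 0`.
If `Leb([0,T] ∩ E) ≥ (1 − c₁) T` and `Leb(L([0,T]) ∩ F) ≥ (1 − c₂) Leb(L([0,T]))`, then
`Leb([0,T] ∩ E ∩ L⁻¹(F)) ≥ (1 − c₁ − c₂ κ₂/κ₁) T`. -/
theorem simultaneous_density_estimate
    (κ₁ κ₂ c₁ c₂ T : ℝ) (h1 : 0 < κ₁) (h12 : κ₁ ≤ κ₂)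
    (hc1 : 0 ≤ c₁) (hc2 : 0 ≤ c₂) (hT : 0 < T)
    (L : ℝ → ℝ)
    (hL : ∀ m ℓ : ℝ, 0 ≤ ℓ → κ₁ * ℓ ≤ L (m + ℓ) - L m ∧ L (m + ℓ) - L m ≤ κ₂ * ℓ)
    (E F : Set ℝ) (hE : MeasurableSet E) (hF : MeasurableSet F)
    (hEdense : ENNReal.ofReal ((1 - c₁) * T) ≤ volume (Set.Icc (0 : ℝ) T ∩ E))
    (hFdense : ENNReal.ofReal (1 - c₂) * volume (L '' Set.Icc (0 : ℝ) T) ≤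
      volume (L '' Set.Icc (0 : ℝ) T ∩ F)) :
    ENNReal.ofReal ((1 - c₁ - c₂ * κ₂ / κ₁) * T) ≤
      volume (Set.Icc (0 : ℝ) T ∩ E ∩ L ⁻¹' F) := by
  have h2 : (0:ℝ) < κ₂ := lt_of_lt_of_le h1 h12
  -- two-sided estimate for x ≤ y
  have hmono : ∀ x y : ℝ, x ≤ y → κ₁ * (y - x) ≤ L y - L x ∧ L y - L x ≤ κ₂ * (y - x) := by
    intro x y hxy
    have h := hL x (y - x) (by linarith)
    rwa [show x + (y - x) = y by ring] at h
  -- L is κ₂-Lipschitz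
  have hlip : LipschitzWith κ₂.toNNReal L := by
    apply LipschitzWith.of_dist_le_mul
    intro x y
    rw [Real.dist_eq, Real.dist_eq, Real.coe_toNNReal _ h2.le]
    rcases le_total x y with h | h
    · have := hmono x y h
      rw [abs_of_nonpos (by nlinarith [this.1] : L x - L y ≤ 0), abs_of_nonpos (by linarith : x - y ≤ 0)]
      nlinarith [this.2]
    · have := hmono y x h
      rw [abs_of_nonneg (by nlinarith [this.1] : (0:ℝ) ≤ L x - L y), abs_of_nonneg (by linarith : (0:ℝ) ≤ x - y)]
      nlinarith [this.2]
  have hinj : Function.Injective L := by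
    have : StrictMono L := by
      intro x y hxy
      have := (hmono x y hxy.le).1
      nlinarith
    exact this.injective
  -- key1 : image measure bound
  have key1 : ∀ S : Set ℝ, volume (L '' S) ≤ ENNReal.ofReal κ₂ * volume S := by
    intro S
    have h := hlip.hausdorffMeasure_image_le zero_le_one S
    rw [MeasureTheory.hausdorffMeasure_real, ENNReal.rpow_one] at h
    exact h
  -- key2 : preimage measure bound, via inverse Lipschitz on the image
  set g : ℝ → ℝ := Function.invFun L with hg
  have hgL : ∀ x, g (L x) = x := fun x => Function.leftInverse_invFun hinj x
  have key2 : ∀ S : Set ℝ, volume S ≤ ENNReal.ofReal κ₁⁻¹ * volume (L '' S) := by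
    intro S
    have hglip : LipschitzOnWith (κ₁⁻¹).toNNReal g (L '' S) := by
      rw [lipschitzOnWith_iff_dist_le_mul]
      rintro _ ⟨x₁, -, rfl⟩ _ ⟨x₂, -, rfl⟩
      rw [hgL, hgL, Real.dist_eq, Real.dist_eq, Real.coe_toNNReal _ (by positivity)]
      have key : ∀ a b : ℝ, b ≤ a → |a - b| ≤ κ₁⁻¹ * |L a - L b| := by
        intro a b hba
        have h := (hmono b a hba).1
        rw [abs_of_nonneg (by linarith : (0:ℝ) ≤ a - b),
          abs_of_nonneg (by nlinarith : (0:ℝ) ≤ L a - L b)]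
        have h2' := mul_le_mul_of_nonneg_left h (by positivity : (0:ℝ) ≤ κ₁⁻¹)
        calc a - b = κ₁⁻¹ * (κ₁ * (a - b)) := by field_simp
        _ ≤ κ₁⁻¹ * (L a - L b) := h2'
      rcases le_total x₂ x₁ with h | h
      · exact key x₁ x₂ h
      · rw [abs_sub_comm, abs_sub_comm (L x₁)]; exact key x₂ x₁ h
    have hsub : S ⊆ g '' (L '' S) := fun x hx => ⟨L x, ⟨x, hx, rfl⟩, hgL x⟩
    have h := hglip.hausdorffMeasure_image_le zero_le_one
    rw [MeasureTheory.hausdorffMeasure_real, ENNReal.rpow_one] at h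
    exact le_trans (measure_mono hsub) h
  set I : Set ℝ := Set.Icc (0:ℝ) T with hI
  set J : Set ℝ := L '' I with hJdef
  have hIvol : volume I = ENNReal.ofReal T := by rw [hI, Real.volume_Icc, sub_zero]
  have hJvol : volume J ≤ ENNReal.ofReal κ₂ * ENNReal.ofReal T := by
    rw [hJdef]; calc volume (L '' I) ≤ ENNReal.ofReal κ₂ * volume I := key1 I
    _ = _ := by rw [hIvol]
  have hJfin : volume J ≠ ⊤ := by
    refine ne_top_of_le_ne_top ?_ hJvol
    exact ENNReal.mul_ne_top ENNReal.ofReal_ne_top ENNReal.ofReal_ne_top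
  -- bound on J \ F
  have hJF : volume (J \ F) ≤ ENNReal.ofReal c₂ * volume J := by
    have hfin : volume (J ∩ F) ≠ ⊤ := ne_top_of_le_ne_top hJfin (measure_mono Set.inter_subset_left)
    have hdiff : volume (J \ F) = volume J - volume (J ∩ F) := by
      have hJmeas : MeasurableSet J := (isCompact_Icc.image hlip.continuous).measurableSet
      rw [show J \ F = J \ (J ∩ F) from (Set.diff_self_inter).symm]
      exact measure_diff Set.inter_subset_left (hJmeas.inter hF).nullMeasurableSet hfin
    rw [hdiff, tsub_le_iff_right]
    calc volume J = 1 * volume J := (one_mul _).symm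
      _ ≤ (ENNReal.ofReal c₂ + ENNReal.ofReal (1 - c₂)) * volume J := by
          gcongr
          calc (1 : ENNReal) = ENNReal.ofReal (c₂ + (1 - c₂)) := by norm_num
          _ ≤ _ := ENNReal.ofReal_add_le
      _ = ENNReal.ofReal c₂ * volume J + ENNReal.ofReal (1 - c₂) * volume J := by ring
      _ ≤ ENNReal.ofReal c₂ * volume J + volume (J ∩ F) := by gcongr
  -- bound on I \ E
  have hIE : volume (I \ E) ≤ ENNReal.ofReal (c₁ * T) := by
    have hfin : volume (I ∩ E) ≠ ⊤ := by
      refine ne_top_of_le_ne_top (by simp [hIvol] : volume I ≠ ⊤) (measure_mono Set.inter_subset_left)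
    have hdiff : volume (I \ E) = volume I - volume (I ∩ E) := by
      rw [show I \ E = I \ (I ∩ E) from (Set.diff_self_inter).symm]
      exact measure_diff Set.inter_subset_left (measurableSet_Icc.inter hE).nullMeasurableSet hfin
    rw [hdiff, tsub_le_iff_right, hIvol]
    calc ENNReal.ofReal T = ENNReal.ofReal (c₁ * T + (1 - c₁) * T) := by ring_nf
      _ ≤ ENNReal.ofReal (c₁ * T) + ENNReal.ofReal ((1 - c₁) * T) := ENNReal.ofReal_add_le
      _ ≤ _ := by gcongr
  -- bound on S := I \ L⁻¹ F
  set S : Set ℝ := I \ (L ⁻¹' F) with hSdef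
  have hS : volume S ≤ ENNReal.ofReal (c₂ * κ₂ / κ₁ * T) := by
    have himg : L '' S ⊆ J \ F := by
      rintro _ ⟨x, ⟨hxI, hxF⟩, rfl⟩
      exact ⟨⟨x, hxI, rfl⟩, hxF⟩
    calc volume S ≤ ENNReal.ofReal κ₁⁻¹ * volume (L '' S) := key2 S
      _ ≤ ENNReal.ofReal κ₁⁻¹ * (ENNReal.ofReal c₂ * volume J) := by
          gcongr
          exact le_trans (measure_mono himg) hJF
      _ ≤ ENNReal.ofReal κ₁⁻¹ * (ENNReal.ofReal c₂ * (ENNReal.ofReal κ₂ * ENNReal.ofReal T)) := by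
          gcongr
      _ = ENNReal.ofReal (κ₁⁻¹ * (c₂ * (κ₂ * T))) := by
          rw [ENNReal.ofReal_mul (by positivity), ENNReal.ofReal_mul hc2,
            ENNReal.ofReal_mul h2.le]
      _ = ENNReal.ofReal (c₂ * κ₂ / κ₁ * T) := by rw [show κ₁⁻¹ * (c₂ * (κ₂ * T)) = c₂ * κ₂ / κ₁ * T by field_simp]
  -- combine
  set G : Set ℝ := I ∩ E ∩ (L ⁻¹' F) with hGdef
  have hcover : I ⊆ G ∪ ((I \ E) ∪ S) := by
    intro x hx
    by_cases hxE : x ∈ E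
    · by_cases hxF : L x ∈ F
      · exact Or.inl ⟨⟨hx, hxE⟩, hxF⟩
      · exact Or.inr (Or.inr ⟨hx, hxF⟩)
    · exact Or.inr (Or.inl ⟨hx, hxE⟩)
  have hmain : ENNReal.ofReal T ≤ volume G + (ENNReal.ofReal (c₁ * T) + ENNReal.ofReal (c₂ * κ₂ / κ₁ * T)) := by
    calc ENNReal.ofReal T = volume I := hIvol.symm
      _ ≤ volume (G ∪ ((I \ E) ∪ S)) := measure_mono hcover
      _ ≤ volume G + (volume (I \ E) + volume S) :=
          le_trans (measure_union_le _ _) (by gcongr; exact measure_union_le _ _)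
      _ ≤ _ := by gcongr
  rcases le_or_gt ((1 - c₁ - c₂ * κ₂ / κ₁) * T) 0 with hneg | hpos
  · rw [ENNReal.ofReal_of_nonpos hneg]; exact zero_le
  · have hx0 : 0 ≤ 1 - c₁ - c₂ * κ₂ / κ₁ := by
      by_contra hcon
      push_neg at hcon
      nlinarith
    have heq : ENNReal.ofReal ((1 - c₁ - c₂ * κ₂ / κ₁) * T) +
        (ENNReal.ofReal (c₁ * T) + ENNReal.ofReal (c₂ * κ₂ / κ₁ * T)) = ENNReal.ofReal T := by
      rw [← ENNReal.ofReal_add (by positivity) (by positivity),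
        ← ENNReal.ofReal_add (by positivity) (by positivity)]
      ring_nf
    have := le_trans heq.le hmain
    exact ENNReal.le_of_add_le_add_right
      (ENNReal.add_ne_top.2 ⟨ENNReal.ofReal_ne_top, ENNReal.ofReal_ne_top⟩) this
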